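/- Let X be a separable stable real Banach space, F_X its space of types with the topology of pointwise convergence on X, and F̂_X = F_X ∪ {∞} its one-point (Alexandroff) compactification. Suppose g : F_X × F_X → ℝ is a function such that for all σ, τ ∈ F_X, for every bounded sequence (x_n) determining σ and every bounded sequence (y_m) determining τ, the iterated limit L = lim_n lim_m ‖x_n − y_m‖ exists and g(σ, τ) = exp(−L). Then the extension ĝ : F̂_X × F̂_X → ℝ defined by ĝ(σ, τ) = g(σ, τ) for σ, τ ∈ F_X and ĝ(σ, τ) = 0 whenever σ = ∞ or τ = ∞, is separately continuous: for each fixed τ ∈ F̂_X the map σ ↦ ĝ(σ, τ) is continuous on F̂_X, and for each fixed σ ∈ F̂_X the map τ ↦ ĝ(σ, τ) is continuous on F̂_X. -/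

import Mathlib

open Filter Topology OnePoint

/-- A sequence in a normed space is bounded. -/
def IsBoundedSeq {X : Type*} [NormedAddCommGroup X] (x : ℕ → X) : Prop :=
  ∃ C : ℝ, ∀ n, ‖x n‖ ≤ C

/-- A real Banach space is *stable* if for all bounded sequences `(x n)`, `(y m)` in `X` such
that both iterated limits of `‖x n + y m‖` exist, the two iterated limits coincide. -/
def IsStable (X : Type*) [NormedAddCommGroup X] : Prop :=
  ∀ (x y : ℕ → X), IsBoundedSeq x → IsBoundedSeq y →
    ∀ (f g : ℕ → ℝ) (a b : ℝ),
      (∀ n, Tendsto (fun m => ‖x n + y m‖) atTop (𝓝 (f n))) →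
      Tendsto f atTop (𝓝 a) →
      (∀ m, Tendsto (fun n => ‖x n + y m‖) atTop (𝓝 (g m))) →
      Tendsto g atTop (𝓝 b) →
      a = b

/-- The bounded sequence `(x n)` determines the type `τ`, i.e. `τ v = lim_n ‖v + x n‖`. -/
def DeterminesType {X : Type*} [NormedAddCommGroup X] (x : ℕ → X) (τ : X → ℝ) : Prop :=
  IsBoundedSeq x ∧ ∀ v : X, Tendsto (fun n => ‖v + x n‖) atTop (𝓝 (τ v))

/-- A *type* on `X` is a function realized as `τ v = lim_n ‖v + x n‖` for some bounded
sequence `(x n)` in `X`. -/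
def IsType {X : Type*} [NormedAddCommGroup X] (τ : X → ℝ) : Prop :=
  ∃ x : ℕ → X, DeterminesType x τ

/-- The space of types on `X`, topologized by pointwise convergence on `X`. -/
def TypeSpace (X : Type*) [NormedAddCommGroup X] : Type _ := {τ : X → ℝ // IsType τ}

instance (X : Type*) [NormedAddCommGroup X] : TopologicalSpace (TypeSpace X) :=
  inferInstanceAs (TopologicalSpace {τ : X → ℝ // IsType τ})

/-- The degenerate type `τ_x : y ↦ ‖x + y‖`. -/
def degenType {X : Type*} [NormedAddCommGroup X] (x : X) : TypeSpace X :=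
  ⟨fun y => ‖x + y‖, fun _ => x, ⟨‖x‖, fun _ => le_rfl⟩, fun v => by
    show Tendsto (fun _ : ℕ => ‖v + x‖) atTop (𝓝 ‖x + v‖)
    rw [add_comm x v]; exact tendsto_const_nhds⟩

/-- A bundled separable reflexive real Banach space. -/
structure SepReflBanach where
  carrier : Type
  [normedGrp : NormedAddCommGroup carrier]
  [normedMod : NormedSpace ℝ carrier]
  [complete : CompleteSpace carrier]
  [separable : TopologicalSpace.SeparableSpace carrier]
  reflexive : Function.Surjective (NormedSpace.inclusionInDoubleDual ℝ carrier)

attribute [instance] SepReflBanach.normedGrp SepReflBanach.normedMod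
  SepReflBanach.complete SepReflBanach.separable

namespace Stmt6Aux

variable {X : Type*} [NormedAddCommGroup X]

lemma det_comp' {x : ℕ → X} {τ : X → ℝ} (h : DeterminesType x τ) {ns : ℕ → ℕ}
    (hns : Tendsto ns atTop atTop) : DeterminesType (x ∘ ns) τ := by
  obtain ⟨⟨C, hC⟩, h2⟩ := h
  exact ⟨⟨C, fun n => hC (ns n)⟩, fun v => (h2 v).comp hns⟩

lemma norm_tendsto {x : ℕ → X} {τ : X → ℝ} (h : DeterminesType x τ) :
    Tendsto (fun n => ‖x n‖) atTop (𝓝 (τ 0)) := by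
  simpa using h.2 0

lemma lip {x : ℕ → X} {τ : X → ℝ} (h : DeterminesType x τ) (u v : X) :
    |τ u - τ v| ≤ ‖u - v‖ := by
  have ht : Tendsto (fun n => |‖u + x n‖ - ‖v + x n‖|) atTop (𝓝 |τ u - τ v|) :=
    ((h.2 u).sub (h.2 v)).abs
  refine le_of_tendsto ht (Eventually.of_forall fun n => ?_)
  calc |‖u + x n‖ - ‖v + x n‖| ≤ ‖(u + x n) - (v + x n)‖ := abs_norm_sub_norm_le _ _
    _ = ‖u - v‖ := by rw [add_sub_add_right_eq_sub]

lemma nonneg {x : ℕ → X} {τ : X → ℝ} (h : DeterminesType x τ) (v : X) : 0 ≤ τ v :=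
  le_of_tendsto_of_tendsto' tendsto_const_nhds (h.2 v) fun _ => norm_nonneg _

lemma upper {x : ℕ → X} {τ : X → ℝ} (h : DeterminesType x τ) (v : X) : τ v ≤ ‖v‖ + τ 0 := by
  refine le_of_tendsto_of_tendsto' (h.2 v) (tendsto_const_nhds.add (norm_tendsto h)) fun n => ?_
  exact norm_add_le v (x n)

lemma lower {x : ℕ → X} {τ : X → ℝ} (h : DeterminesType x τ) (v : X) : ‖v‖ - τ 0 ≤ τ v := by
  refine le_of_tendsto_of_tendsto' (tendsto_const_nhds.sub (norm_tendsto h)) (h.2 v) fun n => ?_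
  have := norm_sub_norm_le v (-(x n))
  simpa [sub_neg_eq_add, add_comm] using this

/-- A bounded real sequence whose every convergent sub-limit equals `a` converges to `a`. -/
lemma tendsto_of_subseq_real {u : ℕ → ℝ} {C a : ℝ} (hb : ∀ n, |u n| ≤ C)
    (h : ∀ ns : ℕ → ℕ, Tendsto ns atTop atTop → ∀ c, Tendsto (u ∘ ns) atTop (𝓝 c) → c = a) :
    Tendsto u atTop (𝓝 a) := by
  apply tendsto_of_subseq_tendsto
  intro ns hns
  obtain ⟨c, _, ψ, hψ, hc⟩ := tendsto_subseq_of_bounded (Metric.isBounded_Icc (-C) C)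
    (x := u ∘ ns) (fun n => by
      have := abs_le.mp (hb (ns n)); exact Set.mem_Icc.mpr ⟨this.1, this.2⟩)
  refine ⟨ψ, ?_⟩
  have hceq : c = a := h (ns ∘ ψ) (hns.comp hψ.tendsto_atTop) c (by convert hc using 1; rfl)
  rw [← hceq]
  convert hc using 1; rfl

noncomputable def tdet (τ : TypeSpace X) : ℕ → X := τ.2.choose

lemma tdet_spec (τ : TypeSpace X) : DeterminesType (tdet τ) τ.1 := τ.2.choose_spec

lemma tlip (τ : TypeSpace X) (u v : X) : |τ.1 u - τ.1 v| ≤ ‖u - v‖ := lip (tdet_spec τ) u v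

lemma eval_continuous (v : X) : Continuous fun σ : TypeSpace X => σ.1 v :=
  (continuous_apply v).comp continuous_subtype_val

lemma abs_sub_le₃' (a b c d : ℝ) : |a - d| ≤ |a - b| + |b - c| + |c - d| := by
  calc |a - d| ≤ |a - c| + |c - d| := abs_sub_le _ _ _
    _ ≤ |a - b| + |b - c| + |c - d| := by gcongr; exact abs_sub_le _ _ _

lemma abs_sub_le₄' (a b c d e : ℝ) : |a - e| ≤ |a - b| + |b - c| + (|c - d| + |d - e|) := by
  calc |a - e| ≤ |a - c| + |c - e| := abs_sub_le _ _ _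
    _ ≤ (|a - b| + |b - c|) + (|c - d| + |d - e|) := by gcongr <;> exact abs_sub_le _ _ _

lemma norm_add_neg_eq₁ (a b : X) : ‖a + -b‖ = ‖-a + b‖ := by
  rw [← norm_neg (a + -b)]; congr 1; abel

lemma norm_add_neg_eq₂ (a b : X) : ‖a + -b‖ = ‖-b + a‖ := by rw [add_comm]

section Sep

variable (X) [TopologicalSpace.SeparableSpace X]

noncomputable def dSeq : ℕ → X :=
  letI : Nonempty X := ⟨0⟩
  TopologicalSpace.denseSeq X

lemma dSeq_dense : DenseRange (dSeq X) :=
  letI : Nonempty X := ⟨0⟩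
  TopologicalSpace.denseRange_denseSeq X

noncomputable def Phi : TypeSpace X → ℕ → ℝ := fun σ n => σ.1 (dSeq X n)

lemma Phi_continuous : Continuous (Phi X) :=
  continuous_pi fun n => eval_continuous (dSeq X n)

lemma Phi_inducing : Topology.IsInducing (Phi X) := by
  rw [Topology.isInducing_iff]
  refine le_antisymm (continuous_iff_le_induced.mp (Phi_continuous X)) ?_
  letI tD : TopologicalSpace (TypeSpace X) := TopologicalSpace.induced (Phi X) inferInstance
  have heval : ∀ v : X, Continuous[tD, _] fun σ : TypeSpace X => σ.1 v := by
    intro v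
    have hv : ∀ k : ℕ, ∃ n : ℕ, ‖dSeq X n - v‖ < 1 / (k + 1) := by
      intro k
      have : (1 : ℝ) / (k + 1) > 0 := by positivity
      obtain ⟨n, hn⟩ := Metric.denseRange_iff.mp (dSeq_dense X) v (1 / (k + 1)) this
      exact ⟨n, by simpa [dist_eq_norm, norm_sub_rev] using hn⟩
    choose w hw using hv
    have hunif : TendstoUniformly (fun k (σ : TypeSpace X) => σ.1 (dSeq X (w k)))
        (fun σ => σ.1 v) atTop := by
      rw [Metric.tendstoUniformly_iff]
      intro ε hε
      obtain ⟨K, hK⟩ := exists_nat_gt (1 / ε)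
      filter_upwards [eventually_ge_atTop K] with k hk σ
      rw [Real.dist_eq]
      have h1 : |σ.1 v - σ.1 (dSeq X (w k))| ≤ ‖v - dSeq X (w k)‖ := tlip σ v _
      have h2 : ‖dSeq X (w k) - v‖ < 1 / (k + 1) := hw k
      have h3 : (1 : ℝ) / (k + 1) ≤ 1 / (K + 1) := by
        apply one_div_le_one_div_of_le (by positivity)
        exact_mod_cast by omega
      have h4 : (1 : ℝ) / (K + 1) < ε := by
        rw [div_lt_iff₀ (by positivity)]
        have : 1 / ε < K + 1 := hK.trans (by linarith)
        calc (1:ℝ) = ε * (1/ε) := by field_simp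
          _ < ε * (K+1) := by exact mul_lt_mul_of_pos_left this hε
      calc |σ.1 v - σ.1 (dSeq X (w k))| ≤ ‖v - dSeq X (w k)‖ := h1
        _ = ‖dSeq X (w k) - v‖ := by rw [norm_sub_rev]
        _ < ε := lt_of_lt_of_le h2 (le_of_lt (lt_of_le_of_lt h3 h4))
    have hcont : ∀ k : ℕ, Continuous[tD, _] fun σ : TypeSpace X => σ.1 (dSeq X (w k)) := by
      intro k
      have : Continuous[tD, _] (Phi X) := continuous_iff_le_induced.mpr le_rfl
      exact (continuous_apply (w k)).comp this
    exact hunif.continuous (Eventually.of_forall hcont).frequently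
  have : Continuous[tD, _] (Subtype.val : TypeSpace X → X → ℝ) :=
    continuous_pi fun v => heval v
  exact continuous_iff_le_induced.mp this

lemma firstCountable : FirstCountableTopology (TypeSpace X) :=
  (Phi_inducing X).firstCountableTopology

lemma isCompact_le (M : ℝ) : IsCompact {σ : TypeSpace X | σ.1 0 ≤ M} := by
  rw [(Phi_inducing X).isCompact_iff]
  have hsub : Phi X '' {σ : TypeSpace X | σ.1 0 ≤ M} ⊆
      Set.pi Set.univ fun n => Set.Icc 0 (‖dSeq X n‖ + M) := by
    rintro _ ⟨σ, hσ, rfl⟩ n _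
    refine ⟨nonneg (tdet_spec σ) _, ?_⟩
    have hσ' : σ.1 0 ≤ M := hσ
    exact le_trans (upper (tdet_spec σ) _) (by linarith)
  refine IsCompact.of_isClosed_subset (isCompact_univ_pi fun n => isCompact_Icc) ?_ hsub
  apply IsSeqClosed.isClosed
  intro F G hF hFG
  choose σ hσM hσF using hF
  have hpt : ∀ n, Tendsto (fun k => (σ k).1 (dSeq X n)) atTop (𝓝 (G n)) := by
    intro n
    have := (tendsto_pi_nhds.mp hFG) n
    simpa [← hσF, Phi] using this
  have hex : ∀ v : X, ∃ c : ℝ, Tendsto (fun k => (σ k).1 v) atTop (𝓝 c) := by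
    intro v
    refine cauchySeq_tendsto_of_complete ?_
    rw [Metric.cauchySeq_iff]
    intro ε hε
    obtain ⟨n, hn⟩ : ∃ n, ‖dSeq X n - v‖ < ε / 4 := by
      obtain ⟨n, hn⟩ := Metric.denseRange_iff.mp (dSeq_dense X) v (ε / 4) (by positivity)
      exact ⟨n, by simpa [dist_eq_norm, norm_sub_rev] using hn⟩
    obtain ⟨N, hN⟩ := Metric.cauchySeq_iff.mp (hpt n).cauchySeq (ε / 4) (by positivity)
    refine ⟨N, fun k hk l hl => ?_⟩
    have h1 : |(σ k).1 v - (σ k).1 (dSeq X n)| ≤ ‖v - dSeq X n‖ := tlip _ _ _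
    have h2 : |(σ l).1 (dSeq X n) - (σ l).1 v| ≤ ‖dSeq X n - v‖ := tlip _ _ _
    have h3 := hN k hk l hl
    rw [Real.dist_eq] at h3 ⊢
    have h4 : ‖v - dSeq X n‖ < ε / 4 := by rwa [norm_sub_rev]
    calc |(σ k).1 v - (σ l).1 v|
        ≤ |(σ k).1 v - (σ k).1 (dSeq X n)| + |(σ k).1 (dSeq X n) - (σ l).1 (dSeq X n)|
          + |(σ l).1 (dSeq X n) - (σ l).1 v| := abs_sub_le₃' _ _ _ _
      _ < ε := by linarith
  choose σbar htend using hex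
  have hlipb : ∀ u v : X, |σbar u - σbar v| ≤ ‖u - v‖ := fun u v =>
    le_of_tendsto_of_tendsto' ((htend u).sub (htend v)).abs tendsto_const_nhds
      fun k => tlip (σ k) u v
  have hm : ∀ k : ℕ, ∃ m : ℕ,
      (∀ i ≤ k, |‖dSeq X i + tdet (σ k) m‖ - (σ k).1 (dSeq X i)| ≤ 1 / (k + 1)) ∧
      ‖tdet (σ k) m‖ ≤ (σ k).1 0 + 1 := by
    intro k
    have h1 : ∀ᶠ m in atTop, ∀ i ∈ Finset.range (k + 1),
        |‖dSeq X i + tdet (σ k) m‖ - (σ k).1 (dSeq X i)| ≤ 1 / (k + 1) := by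
      rw [eventually_all_finset]
      intro i _
      have := (tdet_spec (σ k)).2 (dSeq X i)
      obtain ⟨N, hN⟩ := Metric.tendsto_atTop.mp this (1 / (k + 1)) (by positivity)
      filter_upwards [eventually_ge_atTop N] with m hmN
      exact le_of_lt (by simpa [Real.dist_eq] using hN m hmN)
    have h2 : ∀ᶠ m in atTop, ‖tdet (σ k) m‖ ≤ (σ k).1 0 + 1 := by
      obtain ⟨N, hN⟩ := Metric.tendsto_atTop.mp (norm_tendsto (tdet_spec (σ k))) 1 one_pos
      filter_upwards [eventually_ge_atTop N] with m hmN
      have := hN m hmN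
      rw [Real.dist_eq] at this
      linarith [abs_le.mp this.le |>.2]
    obtain ⟨m, h1m, h2m⟩ := (h1.and h2).exists
    exact ⟨m, fun i hi => h1m i (Finset.mem_range.mpr (by omega)), h2m⟩
  choose m hm1 hm2 using hm
  set w : ℕ → X := fun k => tdet (σ k) (m k) with hw
  have hM : ∀ k, (σ k).1 0 ≤ M := hσM
  have hwB : IsBoundedSeq w := ⟨M + 1, fun k => le_trans (hm2 k) (by linarith [hM k])⟩
  have hwlim : ∀ v : X, Tendsto (fun k => ‖v + w k‖) atTop (𝓝 (σbar v)) := by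
    intro v
    rw [Metric.tendsto_atTop]
    intro ε hε
    obtain ⟨n, hn⟩ : ∃ n, ‖dSeq X n - v‖ < ε / 4 := by
      obtain ⟨n, hn⟩ := Metric.denseRange_iff.mp (dSeq_dense X) v (ε / 4) (by positivity)
      exact ⟨n, by simpa [dist_eq_norm, norm_sub_rev] using hn⟩
    obtain ⟨N1, hN1⟩ := Metric.tendsto_atTop.mp (htend (dSeq X n)) (ε / 8) (by positivity)
    obtain ⟨N2, hN2⟩ := exists_nat_gt (8 / ε)
    refine ⟨max n (max N1 N2), fun k hk => ?_⟩
    have hkn : n ≤ k := le_trans (le_max_left _ _) hk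
    have hkN1 : N1 ≤ k := le_trans (le_trans (le_max_left _ _) (le_max_right _ _)) hk
    have hkN2 : N2 ≤ k := le_trans (le_trans (le_max_right _ _) (le_max_right _ _)) hk
    have e1 : |‖v + w k‖ - ‖dSeq X n + w k‖| ≤ ‖v - dSeq X n‖ := by
      have := abs_norm_sub_norm_le (v + w k) (dSeq X n + w k)
      simpa [add_sub_add_right_eq_sub] using this
    have e2 : |‖dSeq X n + w k‖ - (σ k).1 (dSeq X n)| ≤ 1 / (k + 1) := hm1 k n hkn
    have e3 : |(σ k).1 (dSeq X n) - σbar (dSeq X n)| < ε / 8 := by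
      have := hN1 k hkN1; rwa [Real.dist_eq] at this
    have e4 : |σbar (dSeq X n) - σbar v| ≤ ‖dSeq X n - v‖ := hlipb _ _
    have e5 : (1 : ℝ) / (k + 1) < ε / 8 := by
      have hk' : (N2 : ℝ) ≤ k := by exact_mod_cast hkN2
      have hk8 : (8 : ℝ) / ε < (k : ℝ) + 1 := by linarith [hN2]
      rw [div_lt_div_iff₀ (by positivity) (by positivity)]
      have h8 : (8 : ℝ) < ((k : ℝ) + 1) * ε := (div_lt_iff₀ hε).mp hk8
      linarith
    rw [Real.dist_eq]
    have hnv : ‖v - dSeq X n‖ < ε / 4 := by rwa [norm_sub_rev]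
    calc |‖v + w k‖ - σbar v| ≤ |‖v + w k‖ - ‖dSeq X n + w k‖|
          + |‖dSeq X n + w k‖ - (σ k).1 (dSeq X n)|
          + (|(σ k).1 (dSeq X n) - σbar (dSeq X n)| + |σbar (dSeq X n) - σbar v|) :=
          abs_sub_le₄' _ _ _ _ _
      _ < ε := by linarith
  have hσbarType : IsType σbar := ⟨w, hwB, hwlim⟩
  refine ⟨⟨σbar, hσbarType⟩, ?_, ?_⟩
  · exact le_of_tendsto (htend 0) (Eventually.of_forall hM)
  · funext n
    exact tendsto_nhds_unique (htend (dSeq X n)) (hpt n)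

end Sep

end Stmt6Aux

open Stmt6Aux in
theorem stmt_6 (X : Type*) [NormedAddCommGroup X] [NormedSpace ℝ X] [CompleteSpace X]
    [TopologicalSpace.SeparableSpace X] (hX : IsStable X)
    (g : TypeSpace X → TypeSpace X → ℝ)
    (hg : ∀ (σ τ : TypeSpace X) (xs ys : ℕ → X),
      DeterminesType xs σ.1 → DeterminesType ys τ.1 →
      ∃ (L : ℝ) (f : ℕ → ℝ),
        (∀ n, Tendsto (fun m => ‖xs n - ys m‖) atTop (𝓝 (f n))) ∧
        Tendsto f atTop (𝓝 L) ∧ g σ τ = Real.exp (-L))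
    (ghat : OnePoint (TypeSpace X) → OnePoint (TypeSpace X) → ℝ)
    (hghat : ∀ σ τ : TypeSpace X, ghat σ τ = g σ τ)
    (hinfl : ∀ τ : OnePoint (TypeSpace X), ghat ∞ τ = 0)
    (hinfr : ∀ σ : OnePoint (TypeSpace X), ghat σ ∞ = 0) :
    (∀ τ : OnePoint (TypeSpace X), Continuous fun σ => ghat σ τ) ∧
    (∀ σ : OnePoint (TypeSpace X), Continuous fun τ => ghat σ τ) := by
  classical
  haveI : FirstCountableTopology (TypeSpace X) := firstCountable X
  set L : TypeSpace X → TypeSpace X → ℝ := fun σ τ => -Real.log (g σ τ) with hLdef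
  -- P0 : basic property of L through any determining sequences
  have hP0 : ∀ (σ τ : TypeSpace X) (xs ys : ℕ → X), DeterminesType xs σ.1 →
      DeterminesType ys τ.1 →
      Tendsto (fun n => τ.1 (-(xs n))) atTop (𝓝 (L σ τ)) ∧ g σ τ = Real.exp (-(L σ τ)) := by
    intro σ τ xs ys hxs hys
    obtain ⟨L0, f, hf, hfL, hge⟩ := hg σ τ xs ys hxs hys
    have hLeq : L σ τ = L0 := by
      rw [hLdef]; simp only [hge, Real.log_exp, neg_neg]
    have hfn : ∀ n, f n = τ.1 (-(xs n)) := by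
      intro n
      refine tendsto_nhds_unique (hf n) ?_
      have heq : (fun m => ‖xs n - ys m‖) = fun m => ‖-(xs n) + ys m‖ := by
        funext m; rw [norm_sub_rev, sub_eq_neg_add]
      rw [heq]
      exact hys.2 (-(xs n))
    have : (fun n => τ.1 (-(xs n))) = f := by funext n; rw [hfn n]
    rw [← this] at hfL
    exact ⟨hLeq ▸ hfL, hLeq ▸ hge⟩
  have hP1 : ∀ (σ τ : TypeSpace X) (xs : ℕ → X), DeterminesType xs σ.1 →
      Tendsto (fun n => τ.1 (-(xs n))) atTop (𝓝 (L σ τ)) :=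
    fun σ τ xs hxs => (hP0 σ τ xs (tdet τ) hxs (tdet_spec τ)).1
  have hgexp : ∀ σ τ : TypeSpace X, g σ τ = Real.exp (-(L σ τ)) :=
    fun σ τ => (hP0 σ τ (tdet σ) (tdet τ) (tdet_spec σ) (tdet_spec τ)).2
  -- P2 : L through a sequence determining τ
  have hP2 : ∀ (σ τ : TypeSpace X) (ys : ℕ → X), DeterminesType ys τ.1 →
      Tendsto (fun m => σ.1 (-(ys m))) atTop (𝓝 (L σ τ)) := by
    intro σ τ ys hys
    obtain ⟨Cy, hCy⟩ := hys.1
    have hbd : ∀ m, |σ.1 (-(ys m))| ≤ Cy + σ.1 0 := by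
      intro m
      rw [abs_of_nonneg (nonneg (tdet_spec σ) _)]
      refine le_trans (upper (tdet_spec σ) _) ?_
      have : ‖-(ys m)‖ ≤ Cy := by rw [norm_neg]; exact hCy m
      linarith
    refine tendsto_of_subseq_real hbd ?_
    intro ns hns c hc
    have hys' : DeterminesType (ys ∘ ns) τ.1 := det_comp' hys hns
    obtain ⟨Cx, hCx⟩ := (tdet_spec σ).1
    have h1 : ∀ n, Tendsto (fun m => ‖tdet σ n + -(ys (ns m))‖) atTop
        (𝓝 (τ.1 (-(tdet σ n)))) := by
      intro n
      have heq : (fun m => ‖tdet σ n + -(ys (ns m))‖)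
          = fun m => ‖-(tdet σ n) + (ys ∘ ns) m‖ := by
        funext m; exact norm_add_neg_eq₁ _ _
      rw [heq]
      exact hys'.2 (-(tdet σ n))
    have h3 : ∀ m, Tendsto (fun n => ‖tdet σ n + -(ys (ns m))‖) atTop
        (𝓝 (σ.1 (-(ys (ns m))))) := by
      intro m
      have heq : (fun n => ‖tdet σ n + -(ys (ns m))‖)
          = fun n => ‖-(ys (ns m)) + tdet σ n‖ := by
        funext n; exact norm_add_neg_eq₂ _ _
      rw [heq]
      exact (tdet_spec σ).2 (-(ys (ns m)))
    exact (hX (tdet σ) (fun m => -(ys (ns m))) ⟨Cx, hCx⟩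
      ⟨Cy, fun m => by rw [norm_neg]; exact hCy (ns m)⟩
      (fun n => τ.1 (-(tdet σ n))) (fun m => σ.1 (-(ys (ns m)))) (L σ τ) c
      h1 (hP1 σ τ (tdet σ) (tdet_spec σ)) h3 hc).symm
  -- symmetry of L
  have hsymm : ∀ σ τ : TypeSpace X, L σ τ = L τ σ := fun σ τ =>
    tendsto_nhds_unique (hP2 σ τ (tdet τ) (tdet_spec τ)) (hP1 τ σ (tdet τ) (tdet_spec τ))
  -- lower bound for L
  have hlow : ∀ σ τ : TypeSpace X, σ.1 0 - τ.1 0 ≤ L σ τ := by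
    intro σ τ
    refine le_of_tendsto_of_tendsto'
      ((norm_tendsto (tdet_spec σ)).sub_const (τ.1 0)) (hP1 σ τ (tdet σ) (tdet_spec σ))
      fun n => ?_
    have := lower (tdet_spec τ) (-(tdet σ n))
    rwa [norm_neg] at this
  -- continuity of L in its first variable
  have hcont : ∀ τ : TypeSpace X, Continuous fun σ : TypeSpace X => L σ τ := by
    intro τ
    rw [continuous_iff_seqContinuous]
    intro σs σ hσs
    have hpt : ∀ v : X, Tendsto (fun k => (σs k).1 v) atTop (𝓝 (σ.1 v)) :=
      fun v => ((eval_continuous v).tendsto σ).comp hσs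
    obtain ⟨Cy, hCy⟩ := (tdet_spec τ).1
    obtain ⟨B, hB⟩ : ∃ B : ℝ, ∀ k, (σs k).1 0 ≤ B := by
      obtain ⟨B, hB⟩ := (hpt 0).bddAbove_range
      exact ⟨B, fun k => hB (Set.mem_range_self k)⟩
    have hbd : ∀ k, |L (σs k) τ| ≤ Cy + B := by
      intro k
      have hnn : 0 ≤ L (σs k) τ :=
        le_of_tendsto_of_tendsto' tendsto_const_nhds
          (hP1 (σs k) τ (tdet (σs k)) (tdet_spec (σs k)))
          fun n => nonneg (tdet_spec τ) _
      rw [abs_of_nonneg hnn]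
      refine le_of_tendsto (hP2 (σs k) τ (tdet τ) (tdet_spec τ))
        (Eventually.of_forall fun m' => ?_)
      refine le_trans (upper (tdet_spec (σs k)) _) ?_
      have h1 : ‖-(tdet τ m')‖ ≤ Cy := by rw [norm_neg]; exact hCy m'
      have h2 := hB k
      linarith
    show Tendsto (fun k => L (σs k) τ) atTop (𝓝 (L σ τ))
    refine tendsto_of_subseq_real hbd ?_
    intro ns hns c hc
    set ρ : ℕ → TypeSpace X := fun j => σs (ns j) with hρ
    have hρpt : ∀ v : X, Tendsto (fun j => (ρ j).1 v) atTop (𝓝 (σ.1 v)) :=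
      fun v => (hpt v).comp hns
    have hρL : Tendsto (fun j => L (ρ j) τ) atTop (𝓝 c) := hc
    -- diagonal extraction
    have hm : ∀ j : ℕ, ∃ m : ℕ,
        (∀ i ≤ j, |‖-(tdet τ i) + tdet (ρ j) m‖ - (ρ j).1 (-(tdet τ i))| ≤ 1 / (j + 1)) ∧
        |τ.1 (-(tdet (ρ j) m)) - L (ρ j) τ| ≤ 1 / (j + 1) ∧
        ‖tdet (ρ j) m‖ ≤ (ρ j).1 0 + 1 := by
      intro j
      have e1 : ∀ᶠ m in atTop, ∀ i ∈ Finset.range (j + 1),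
          |‖-(tdet τ i) + tdet (ρ j) m‖ - (ρ j).1 (-(tdet τ i))| ≤ 1 / (j + 1) := by
        rw [eventually_all_finset]
        intro i _
        obtain ⟨N, hN⟩ := Metric.tendsto_atTop.mp ((tdet_spec (ρ j)).2 (-(tdet τ i)))
          (1 / (j + 1)) (by positivity)
        filter_upwards [eventually_ge_atTop N] with m hmN
        exact le_of_lt (by simpa [Real.dist_eq] using hN m hmN)
      have e2 : ∀ᶠ m in atTop, |τ.1 (-(tdet (ρ j) m)) - L (ρ j) τ| ≤ 1 / (j + 1) := by
        obtain ⟨N, hN⟩ := Metric.tendsto_atTop.mp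
          (hP1 (ρ j) τ (tdet (ρ j)) (tdet_spec (ρ j))) (1 / (j + 1)) (by positivity)
        filter_upwards [eventually_ge_atTop N] with m hmN
        exact le_of_lt (by simpa [Real.dist_eq] using hN m hmN)
      have e3 : ∀ᶠ m in atTop, ‖tdet (ρ j) m‖ ≤ (ρ j).1 0 + 1 := by
        obtain ⟨N, hN⟩ := Metric.tendsto_atTop.mp (norm_tendsto (tdet_spec (ρ j))) 1 one_pos
        filter_upwards [eventually_ge_atTop N] with m hmN
        have := hN m hmN
        rw [Real.dist_eq] at this
        linarith [abs_le.mp this.le |>.2]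
      obtain ⟨m, ⟨h1m, h2m⟩, h3m⟩ := ((e1.and e2).and e3).exists
      exact ⟨m, fun i hi => h1m i (Finset.mem_range.mpr (by omega)), h2m, h3m⟩
    choose m hma hmb hmc using hm
    set z : ℕ → X := fun j => tdet (ρ j) (m j) with hz
    have hzB : IsBoundedSeq z := by
      refine ⟨B + 1, fun j => le_trans (hmc j) ?_⟩
      have := hB (ns j)
      simpa [hρ] using by linarith
    have hf1 : ∀ j, Tendsto (fun m' => ‖z j + -(tdet τ m')‖) atTop (𝓝 (τ.1 (-(z j)))) := by
      intro j
      have heq : (fun m' => ‖z j + -(tdet τ m')‖) = fun m' => ‖-(z j) + tdet τ m'‖ := by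
        funext m'; exact norm_add_neg_eq₁ _ _
      rw [heq]
      exact (tdet_spec τ).2 (-(z j))
    have hf2 : Tendsto (fun j => τ.1 (-(z j))) atTop (𝓝 c) := by
      have hdiff : Tendsto (fun j => τ.1 (-(z j)) - L (ρ j) τ) atTop (𝓝 0) := by
        refine squeeze_zero_norm (fun j => ?_) tendsto_one_div_add_atTop_nhds_zero_nat
        simpa [Real.norm_eq_abs] using hmb j
      have := hdiff.add hρL
      simpa using this
    have hg1 : ∀ m', Tendsto (fun j => ‖z j + -(tdet τ m')‖) atTop
        (𝓝 (σ.1 (-(tdet τ m')))) := by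
      intro m'
      have hdiff : Tendsto (fun j => ‖-(tdet τ m') + z j‖ - (ρ j).1 (-(tdet τ m')))
          atTop (𝓝 0) := by
        refine squeeze_zero_norm' ?_ tendsto_one_div_add_atTop_nhds_zero_nat
        filter_upwards [eventually_ge_atTop m'] with j hj
        simpa [Real.norm_eq_abs] using hma j m' hj
      have := hdiff.add (hρpt (-(tdet τ m')))
      have heq : (fun j => ‖z j + -(tdet τ m')‖) = fun j => ‖-(tdet τ m') + z j‖ := by
        funext j; exact norm_add_neg_eq₂ _ _
      rw [heq]
      simpa using this
    exact (hX z (fun m' => -(tdet τ m')) hzB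
      ⟨Cy, fun m' => by rw [norm_neg]; exact hCy m'⟩
      (fun j => τ.1 (-(z j))) (fun m' => σ.1 (-(tdet τ m'))) c (L σ τ)
      hf1 hf2 hg1 (hP2 σ τ (tdet τ) (tdet_spec τ)))
  -- continuity of g in its first variable
  have hgcont : ∀ τ : TypeSpace X, Continuous fun σ : TypeSpace X => g σ τ := by
    intro τ
    have : (fun σ : TypeSpace X => g σ τ) = fun σ => Real.exp (-(L σ τ)) :=
      funext fun σ => hgexp σ τ
    rw [this]
    exact Real.continuous_exp.comp (hcont τ).neg
  -- the one-variable continuity statement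
  have hmain : ∀ τ0 : OnePoint (TypeSpace X), Continuous fun σ0 => ghat σ0 τ0 := by
    intro τ0
    cases τ0 with
    | infty =>
      simpa only [hinfr] using continuous_const (y := (0 : ℝ))
    | coe τ =>
      rw [OnePoint.continuous_iff]
      constructor
      · rw [show ghat ∞ ↑τ = 0 from hinfl ↑τ]
        rw [Filter.hasBasis_coclosedCompact.tendsto_left_iff]
        intro t ht
        obtain ⟨ε, hε, hball⟩ := Metric.mem_nhds_iff.mp ht
        refine ⟨{σ : TypeSpace X | σ.1 0 ≤ τ.1 0 - Real.log ε},
          ⟨isClosed_le (eval_continuous 0) continuous_const, isCompact_le X _⟩, ?_⟩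
        intro σ hσ
        apply hball
        have hσ' : τ.1 0 - Real.log ε < σ.1 0 := by
          by_contra hcon
          exact hσ (by simpa using not_lt.mp hcon)
        have hL : -Real.log ε < L σ τ := by
          have := hlow σ τ
          linarith
        have hgε : g σ τ < ε := by
          rw [hgexp σ τ, ← Real.exp_log hε]
          exact Real.exp_lt_exp.mpr (by linarith)
        have hgpos : 0 < g σ τ := by rw [hgexp σ τ]; exact Real.exp_pos _
        simp only [Metric.mem_ball, Real.dist_eq, hghat]
        rw [sub_zero, abs_of_pos hgpos]
        exact hgε
      · have : (fun σ : TypeSpace X => ghat ↑σ ↑τ) = fun σ => g σ τ :=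
          funext fun σ => hghat σ τ
        rw [this]
        exact hgcont τ
  refine ⟨hmain, ?_⟩
  intro σ0
  cases σ0 with
  | infty =>
    simpa only [hinfl] using continuous_const (y := (0 : ℝ))
  | coe σ =>
    have : (fun τ0 => ghat ↑σ τ0) = fun τ0 => ghat τ0 ↑σ := by
      funext τ0
      cases τ0 with
      | infty => rw [hinfr, hinfl]
      | coe τ =>
        rw [hghat, hghat]
        rw [hgexp σ τ, hgexp τ σ, hsymm σ τ]
    rw [this]
    exact hmain ↑σ
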